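/- Percolation of compactness: In the Hilbert complex H1 →^S H2 →^T H3 →^R H4 (closed densely defined operators, consecutive compositions zero), suppose both Laplacians □₂ = S S* + T* T on H2 and □₃ = T T* + R* R on H3 have bounded inverses N₂ and N₃. If N₂ is compact, then the canonical solution operator T* N₃ : H3 → H2 restricted to Ker(R) ∩ Ran(T)-closure is compact. -/

import Mathlib

open scoped InnerProductSpace

/-- If `‖A x‖² ≤ ‖x‖ * ‖M x‖` for a compact operator `M`, then `A` is compact. -/
lemma isCompactOperator_of_sq_norm_le {E F G : Type*}
    [NormedAddCommGroup E] [NormedSpace ℂ E]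
    [NormedAddCommGroup F] [NormedSpace ℂ F] [CompleteSpace F]
    [NormedAddCommGroup G] [NormedSpace ℂ G]
    (A : E →L[ℂ] F) (M : E →L[ℂ] G) (hM : IsCompactOperator M)
    (h : ∀ x : E, ‖A x‖ ^ 2 ≤ ‖x‖ * ‖M x‖) : IsCompactOperator A := by
  have htb : TotallyBounded ((⇑A) '' Metric.ball 0 1) := by
    have hMtb : TotallyBounded ((⇑M) '' Metric.ball 0 2) :=
      (IsCompactOperator.isCompact_closure_image_ball
        (f := (M : E →ₗ[ℂ] G)) hM 2).totallyBounded.subset subset_closure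
    rw [Metric.totallyBounded_iff]
    intro ε hε
    have hδ : (0:ℝ) < ε ^ 2 / 8 := by positivity
    obtain ⟨t, hts, htf, hcov⟩ :=
      totallyBounded_iff_subset.1 hMtb _ (Metric.dist_mem_uniformity hδ)
    have hch := fun y (hy : y ∈ t) => hts hy
    choose! g hg1 hg2 using hch
    refine ⟨(fun y => A (g y)) '' t, htf.image _, ?_⟩
    rintro a ⟨x, hx, rfl⟩
    have hx2 : M x ∈ (⇑M) '' Metric.ball 0 2 :=
      ⟨x, Metric.ball_subset_ball (by norm_num) hx, rfl⟩
    obtain ⟨y, hyt, hyd⟩ := Set.mem_iUnion₂.1 (hcov hx2)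
    refine Set.mem_iUnion₂.2 ⟨A (g y), ⟨y, hyt, rfl⟩, ?_⟩
    rw [Metric.mem_ball, dist_eq_norm, ← map_sub]
    have hxn : ‖x‖ < 1 := by simpa [dist_eq_norm] using hx
    have hgn : ‖g y‖ < 2 := by
      have := hg1 y hyt
      simpa [dist_eq_norm] using this
    have hsub : ‖x - g y‖ < 3 := by
      calc ‖x - g y‖ ≤ ‖x‖ + ‖g y‖ := norm_sub_le _ _
      _ < 3 := by linarith
    have hMd : ‖M (x - g y)‖ < ε ^ 2 / 8 := by
      have h2 := hg2 y hyt
      rw [map_sub, h2]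
      simpa [dist_eq_norm] using hyd
    have hkey := h (x - g y)
    have hsq : ‖A (x - g y)‖ ^ 2 < ε ^ 2 := by
      nlinarith [norm_nonneg (x - g y), norm_nonneg (M (x - g y)),
        norm_nonneg (A (x - g y))]
    exact lt_of_pow_lt_pow_left₀ 2 hε.le hsq
  have hcl : IsCompact (closure ((⇑A) '' Metric.ball 0 1)) :=
    TotallyBounded.isCompact_of_isClosed htb.closure isClosed_closure
  exact (isCompactOperator_iff_isCompact_closure_image_ball
    (f := (A : E →ₗ[ℂ] F)) one_pos).2 hcl

/-- Percolation of compactness up the complex: in the Hilbert complex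
`H1 →S H2 →T H3 →R H4`, if both Laplacians `□₂ = S S* + T* T` and `□₃ = T T* + R* R`
have bounded inverses `N₂`, `N₃` and `N₂` is compact, then the canonical solution
operator `T* N₃` is compact on `Ker(R) ∩ closure(Ran(T))`. -/
theorem stmt12 {H1 H2 H3 H4 : Type*}
    [NormedAddCommGroup H1] [InnerProductSpace ℂ H1] [CompleteSpace H1]
    [NormedAddCommGroup H2] [InnerProductSpace ℂ H2] [CompleteSpace H2]
    [NormedAddCommGroup H3] [InnerProductSpace ℂ H3] [CompleteSpace H3]
    [NormedAddCommGroup H4] [InnerProductSpace ℂ H4] [CompleteSpace H4]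
    (S : H1 →ₗ.[ℂ] H2) (T : H2 →ₗ.[ℂ] H3) (R : H3 →ₗ.[ℂ] H4)
    (hS_dense : Dense (S.domain : Set H1)) (hT_dense : Dense (T.domain : Set H2))
    (hR_dense : Dense (R.domain : Set H3))
    (hS_closed : S.IsClosed) (hT_closed : T.IsClosed) (hR_closed : R.IsClosed)
    (hTS : ∀ x : S.domain, ∃ h : S x ∈ T.domain, T ⟨S x, h⟩ = 0)
    (hRT : ∀ x : T.domain, ∃ h : T x ∈ R.domain, R ⟨T x, h⟩ = 0)
    (N2 : H2 →L[ℂ] H2) (N3 : H3 →L[ℂ] H3)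
    -- `N₂` is a bounded inverse of `□₂ = S S* + T* T`
    (hN2 : ∀ u : H2, ∃ (h1 : N2 u ∈ S.adjoint.domain) (h2 : N2 u ∈ T.domain)
      (h3 : S.adjoint ⟨N2 u, h1⟩ ∈ S.domain) (h4 : T ⟨N2 u, h2⟩ ∈ T.adjoint.domain),
      S ⟨S.adjoint ⟨N2 u, h1⟩, h3⟩ + T.adjoint ⟨T ⟨N2 u, h2⟩, h4⟩ = u)
    -- `N₃` is a bounded inverse of `□₃ = T T* + R* R`
    (hN3 : ∀ v : H3, ∃ (h1 : N3 v ∈ T.adjoint.domain) (h2 : N3 v ∈ R.domain)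
      (h3 : T.adjoint ⟨N3 v, h1⟩ ∈ T.domain) (h4 : R ⟨N3 v, h2⟩ ∈ R.adjoint.domain),
      T ⟨T.adjoint ⟨N3 v, h1⟩, h3⟩ + R.adjoint ⟨R ⟨N3 v, h2⟩, h4⟩ = v)
    -- the canonical solution operator `A3 = T* N₃` as a bounded operator
    (A3 : H3 →L[ℂ] H2)
    (hA3 : ∀ v : H3, ∃ h1 : N3 v ∈ T.adjoint.domain, A3 v = T.adjoint ⟨N3 v, h1⟩)
    (hN2compact : IsCompactOperator N2) :
    IsCompact (closure (A3 ''
      (({v : H3 | ∃ h : v ∈ R.domain, R ⟨v, h⟩ = 0} ∩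
        closure {w : H3 | ∃ x : T.domain, T x = w}) ∩ Metric.closedBall 0 1))) := by
  classical
  have hTadj : T.adjoint.IsFormalAdjoint T := T.adjoint_isFormalAdjoint hT_dense
  have hRadj : R.adjoint.IsFormalAdjoint R := R.adjoint_isFormalAdjoint hR_dense
  have hSadj : S.adjoint.IsFormalAdjoint S := S.adjoint_isFormalAdjoint hS_dense
  have hdomN2 : ∀ w : H2, N2 w ∈ T.domain := fun w => by
    obtain ⟨_, h2, _, _, _⟩ := hN2 w; exact h2
  -- the bounded operator `B = T ∘ N₂`
  let Blin : H2 →ₗ[ℂ] H3 :=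
    { toFun := fun w => T ⟨N2 w, hdomN2 w⟩
      map_add' := fun a b => by
        have h : (⟨N2 (a + b), hdomN2 (a + b)⟩ : T.domain)
            = ⟨N2 a, hdomN2 a⟩ + ⟨N2 b, hdomN2 b⟩ := by
          ext; simp
        show T ⟨N2 (a + b), hdomN2 (a + b)⟩
            = T ⟨N2 a, hdomN2 a⟩ + T ⟨N2 b, hdomN2 b⟩
        rw [h, T.map_add]
      map_smul' := fun c a => by
        have h : (⟨N2 (c • a), hdomN2 (c • a)⟩ : T.domain)
            = c • (⟨N2 a, hdomN2 a⟩ : T.domain) := by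
          ext; simp
        show T ⟨N2 (c • a), hdomN2 (c • a)⟩ = (RingHom.id ℂ) c • T ⟨N2 a, hdomN2 a⟩
        rw [h, T.map_smul]; rfl }
  -- the key estimate `‖B w‖² ≤ ‖w‖ ‖N₂ w‖`
  have keyB : ∀ w : H2, ‖Blin w‖ ^ 2 ≤ ‖w‖ * ‖N2 w‖ := by
    intro w
    obtain ⟨h1, h2, h3, h4, heq⟩ := hN2 w
    have hBw : Blin w = T ⟨N2 w, h2⟩ := rfl
    have hfull : ⟪w, N2 w⟫_ℂ
        = ((‖S.adjoint ⟨N2 w, h1⟩‖ ^ 2 + ‖T ⟨N2 w, h2⟩‖ ^ 2 : ℝ) : ℂ) := by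
      nth_rewrite 1 [← heq]
      rw [inner_add_left]
      have h5 := hSadj ⟨N2 w, h1⟩ ⟨S.adjoint ⟨N2 w, h1⟩, h3⟩
      have h6 := hTadj ⟨T ⟨N2 w, h2⟩, h4⟩ ⟨N2 w, h2⟩
      have h5' : ⟪(S ⟨S.adjoint ⟨N2 w, h1⟩, h3⟩ : H2), N2 w⟫_ℂ
          = ((‖S.adjoint ⟨N2 w, h1⟩‖ ^ 2 : ℝ) : ℂ) := by
        rw [← inner_conj_symm]
        have h5'' : ⟪(N2 w : H2), S ⟨S.adjoint ⟨N2 w, h1⟩, h3⟩⟫_ℂ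
            = ((‖S.adjoint ⟨N2 w, h1⟩‖ ^ 2 : ℝ) : ℂ) := by
          rw [← h5, inner_self_eq_norm_sq_to_K]
          norm_num
        rw [h5'']
        simp
      have h6' : ⟪(T.adjoint ⟨T ⟨N2 w, h2⟩, h4⟩ : H2), N2 w⟫_ℂ
          = ((‖T ⟨N2 w, h2⟩‖ ^ 2 : ℝ) : ℂ) := by
        rw [h6, inner_self_eq_norm_sq_to_K]
        norm_num
      rw [h5', h6']
      push_cast
      ring
    have h7 : Complex.re ⟪w, N2 w⟫_ℂ
        = ‖S.adjoint ⟨N2 w, h1⟩‖ ^ 2 + ‖T ⟨N2 w, h2⟩‖ ^ 2 := by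
      rw [hfull]; norm_cast
    have h8 : Complex.re ⟪w, N2 w⟫_ℂ ≤ ‖w‖ * ‖N2 w‖ := by
      calc Complex.re ⟪w, N2 w⟫_ℂ ≤ ‖⟪w, N2 w⟫_ℂ‖ := Complex.re_le_norm _
      _ ≤ ‖w‖ * ‖N2 w‖ := norm_inner_le_norm _ _
    rw [hBw]
    nlinarith [sq_nonneg ‖S.adjoint ⟨N2 w, h1⟩‖]
  have hBle : ∀ w : H2, ‖Blin w‖ ≤ Real.sqrt ‖N2‖ * ‖w‖ := by
    intro w
    have h1 := keyB w
    have h2 : ‖N2 w‖ ≤ ‖N2‖ * ‖w‖ := N2.le_opNorm w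
    have h3 : ‖Blin w‖ ^ 2 ≤ (Real.sqrt ‖N2‖ * ‖w‖) ^ 2 := by
      rw [mul_pow, Real.sq_sqrt (norm_nonneg N2)]
      nlinarith [norm_nonneg w, norm_nonneg (N2 w)]
    calc ‖Blin w‖ = Real.sqrt (‖Blin w‖ ^ 2) := (Real.sqrt_sq (norm_nonneg _)).symm
      _ ≤ Real.sqrt ((Real.sqrt ‖N2‖ * ‖w‖) ^ 2) := Real.sqrt_le_sqrt h3
      _ = Real.sqrt ‖N2‖ * ‖w‖ := Real.sqrt_sq (by positivity)
  let B : H2 →L[ℂ] H3 := Blin.mkContinuous (Real.sqrt ‖N2‖) hBle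
  have hBapp : ∀ w, B w = T ⟨N2 w, hdomN2 w⟩ := fun _ => rfl
  have hBcompact : IsCompactOperator B :=
    isCompactOperator_of_sq_norm_le B N2 hN2compact (fun x => keyB x)
  -- the adjoint `C = B*` is compact
  set C := ContinuousLinearMap.adjoint B with hC
  have hBBc : IsCompactOperator (B.comp C) := by
    have := hBcompact.comp_clm C
    exact this
  have hCcompact : IsCompactOperator C := by
    apply isCompactOperator_of_sq_norm_le C (B.comp C) hBBc
    intro v
    have h1 : (‖C v‖ ^ 2 : ℝ) = Complex.re ⟪C v, C v⟫_ℂ :=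
      (inner_self_eq_norm_sq (𝕜 := ℂ) (C v)).symm
    have h2 : ⟪C v, C v⟫_ℂ = ⟪v, B (C v)⟫_ℂ :=
      ContinuousLinearMap.adjoint_inner_left B (C v) v
    have h3 : Complex.re ⟪v, B (C v)⟫_ℂ ≤ ‖v‖ * ‖B (C v)‖ := by
      calc Complex.re ⟪v, B (C v)⟫_ℂ ≤ ‖⟪v, B (C v)⟫_ℂ‖ := Complex.re_le_norm _
      _ ≤ ‖v‖ * ‖B (C v)‖ := norm_inner_le_norm _ _
    have h4 : (B.comp C) v = B (C v) := rfl
    rw [h4, h1, h2]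
    exact h3
  -- key algebraic fact: for `v ∈ ker R`, `T (T* N₃ v) = v`
  have hTu : ∀ (v : H3) (hv : v ∈ R.domain), R ⟨v, hv⟩ = 0 →
      ∀ (h1 : N3 v ∈ T.adjoint.domain) (h3 : T.adjoint ⟨N3 v, h1⟩ ∈ T.domain),
      T ⟨T.adjoint ⟨N3 v, h1⟩, h3⟩ = v := by
    intro v hv hv0 h1 h3
    obtain ⟨h1', h2', h3', h4', heq⟩ := hN3 v
    have heq' : T ⟨T.adjoint ⟨N3 v, h1⟩, h3⟩ + R.adjoint ⟨R ⟨N3 v, h2'⟩, h4'⟩ = v := heq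
    set q := R.adjoint ⟨R ⟨N3 v, h2'⟩, h4'⟩ with hqdef
    have hqv : ⟪q, v⟫_ℂ = 0 := by
      have h := hRadj ⟨R ⟨N3 v, h2'⟩, h4'⟩ ⟨v, hv⟩
      rw [hv0] at h
      simpa using h
    have hqp : ⟪q, T ⟨T.adjoint ⟨N3 v, h1⟩, h3⟩⟫_ℂ = 0 := by
      obtain ⟨hr, hr0⟩ := hRT ⟨T.adjoint ⟨N3 v, h1⟩, h3⟩
      have h := hRadj ⟨R ⟨N3 v, h2'⟩, h4'⟩ ⟨T ⟨T.adjoint ⟨N3 v, h1⟩, h3⟩, hr⟩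
      rw [hr0] at h
      simpa using h
    have hqq : ⟪q, q⟫_ℂ = 0 := by
      have hsum : ⟪q, T ⟨T.adjoint ⟨N3 v, h1⟩, h3⟩⟫_ℂ + ⟪q, q⟫_ℂ = ⟪q, v⟫_ℂ := by
        rw [← inner_add_right, heq']
      rw [hqp, hqv, zero_add] at hsum
      exact hsum
    have hq0 : q = 0 := inner_self_eq_zero.1 hqq
    rw [hq0, add_zero] at heq'
    exact heq'
  -- the main identity: `A3 = B*` on `ker R`
  have hmain : ∀ (v : H3) (hv : v ∈ R.domain), R ⟨v, hv⟩ = 0 → A3 v = C v := by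
    intro v hv hv0
    apply ext_inner_right ℂ
    intro w
    rw [hC, ContinuousLinearMap.adjoint_inner_left]
    obtain ⟨hv1, hA3v⟩ := hA3 v
    obtain ⟨h1', h2', h3', h4', _⟩ := hN3 v
    have hdomA3 : A3 v ∈ T.domain := by rw [hA3v]; exact h3'
    obtain ⟨g1, g2, g3, g4, gw⟩ := hN2 w
    conv_lhs => rw [← gw]
    rw [inner_add_right]
    have hterm1 : ⟪A3 v, (S ⟨S.adjoint ⟨N2 w, g1⟩, g3⟩ : H2)⟫_ℂ = 0 := by
      obtain ⟨hts1, hts0⟩ := hTS ⟨S.adjoint ⟨N2 w, g1⟩, g3⟩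
      rw [hA3v]
      have h := hTadj ⟨N3 v, hv1⟩ ⟨S ⟨S.adjoint ⟨N2 w, g1⟩, g3⟩, hts1⟩
      rw [hts0] at h
      simpa using h
    have hTv : T ⟨A3 v, hdomA3⟩ = v := by
      have hmem : T.adjoint ⟨N3 v, hv1⟩ ∈ T.domain := hA3v ▸ hdomA3
      have hsub : (⟨A3 v, hdomA3⟩ : T.domain) = ⟨T.adjoint ⟨N3 v, hv1⟩, hmem⟩ :=
        Subtype.ext hA3v
      rw [hsub]
      exact hTu v hv hv0 hv1 hmem
    have hterm2 : ⟪A3 v, (T.adjoint ⟨T ⟨N2 w, g2⟩, g4⟩ : H2)⟫_ℂ = ⟪v, B w⟫_ℂ := by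
      rw [← inner_conj_symm]
      have h := hTadj ⟨T ⟨N2 w, g2⟩, g4⟩ ⟨A3 v, hdomA3⟩
      rw [hTv] at h
      have hBw : B w = T ⟨N2 w, g2⟩ := rfl
      rw [h, inner_conj_symm]
      show ⟪v, (T ⟨N2 w, g2⟩ : H3)⟫_ℂ = ⟪v, B w⟫_ℂ
      rw [hBw]
    rw [hterm1, hterm2, zero_add]
  -- finish: the image is contained in `B*` of the closed unit ball
  have himg : A3 '' (({v : H3 | ∃ h : v ∈ R.domain, R ⟨v, h⟩ = 0} ∩
        closure {w : H3 | ∃ x : T.domain, T x = w}) ∩ Metric.closedBall 0 1)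
      ⊆ C '' Metric.closedBall 0 1 := by
    rintro _ ⟨v, ⟨⟨⟨hv, hv0⟩, -⟩, hball⟩, rfl⟩
    exact ⟨v, hball, (hmain v hv hv0).symm⟩
  have hKcomp : IsCompact (closure ((⇑C) '' Metric.closedBall 0 1)) :=
    IsCompactOperator.isCompact_closure_image_closedBall
      (f := (C : H3 →ₗ[ℂ] H2)) hCcompact 1
  exact hKcomp.of_isClosed_subset isClosed_closure (closure_mono himg)
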